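/- arXiv:1105.2407 — 4 statements merged into one kernel-verified Lean document; each statement's English description precedes it below -/
import Mathlib

section
/- Fix α > 0 and y ∈ V. For every sequence (y_k) in V converging in norm to y, and every sequence (u_k) in U such that u_k is a minimizer of T_{α,y_k} for each k, the sequence (u_k) has a weakly convergent subsequence, and every weak limit point of (u_k) is a minimizer of T_{α,y}. -/
open Filter Topology ENNReal

/-- Weak convergence of a sequence in a real inner ℝ product space. -/
def WeakConv {U : Type*} [NormedAddCommGroup U] [InnerProductSpace ℝ U]
    (u : ℕ → U) (x : U) : Prop :=
  ∀ w : U, Tendsto (fun k => (inner ℝ w (u k) : ℝ)) atTop (nhds (inner ℝ w x : ℝ))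

/-- The Tikhonov functional `T_{α,y}(u) = (1/2)‖F u − y‖² + α R(u)`. -/
noncomputable def Tik {U V : Type*} [NormedAddCommGroup U] [InnerProductSpace ℝ U]
    [NormedAddCommGroup V] [InnerProductSpace ℝ V]
    (F : U →L[ℝ] V) (R : U → ℝ≥0∞) (α : ℝ) (y : V) (u : U) : ℝ≥0∞ :=
  ENNReal.ofReal (2⁻¹ * ‖F u - y‖ ^ 2) + ENNReal.ofReal α * R u

/-- Superadditivity of `liminf` in `ℝ≥0∞`. -/
lemma my_liminf_add (f g : ℕ → ℝ≥0∞) :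
    atTop.liminf f + atTop.liminf g ≤ atTop.liminf (fun k => f k + g k) := by
  rw [liminf_eq_iSup_iInf_of_nat, liminf_eq_iSup_iInf_of_nat, liminf_eq_iSup_iInf_of_nat]
  rw [iSup_add_iSup_of_monotone (f := fun n => ⨅ i, ⨅ (_ : i ≥ n), f i)]
  · refine iSup_mono fun n => ?_
    refine le_iInf₂ fun i hi => ?_
    exact add_le_add (iInf₂_le i hi) (iInf₂_le i hi)
  · intro m n hmn
    exact le_iInf₂ fun i hi => iInf₂_le i (le_trans hmn hi)
  · intro m n hmn
    exact le_iInf₂ fun i hi => iInf₂_le i (le_trans hmn hi)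

/-- Every bounded sequence in a real Hilbert space has a weakly convergent subsequence. -/
lemma my_weak_compact {U : Type*} [NormedAddCommGroup U] [InnerProductSpace ℝ U]
    [CompleteSpace U] (u : ℕ → U) (B : ℝ) (hB : ∀ k, ‖u k‖ ≤ B) :
    ∃ φ : ℕ → ℕ, StrictMono φ ∧ ∃ x : U, WeakConv (u ∘ φ) x := by
  have hB0 : 0 ≤ B := le_trans (norm_nonneg (u 0)) (hB 0)
  -- diagonal extraction via sequential compactness of a product of intervals
  have hcpt : IsSeqCompact ((Set.univ : Set ℕ).pi fun _ => Set.Icc (-(B*B)) (B*B)) :=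
    (isCompact_univ_pi fun _ => isCompact_Icc).isSeqCompact
  have hmem : ∀ k, (fun j => (inner ℝ (u j) (u k) : ℝ)) ∈
      (Set.univ : Set ℕ).pi fun _ => Set.Icc (-(B*B)) (B*B) := by
    intro k j _
    have h1 : |(inner ℝ (u j) (u k) : ℝ)| ≤ ‖u j‖ * ‖u k‖ := abs_real_inner_le_norm _ _
    have h2 : ‖u j‖ * ‖u k‖ ≤ B * B :=
      mul_le_mul (hB j) (hB k) (norm_nonneg _) hB0
    have := abs_le.mp (le_trans h1 h2)
    exact ⟨this.1, this.2⟩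
  obtain ⟨g, -, φ, hφ, hconv⟩ := hcpt hmem
  refine ⟨φ, hφ, ?_⟩
  rw [tendsto_pi_nhds] at hconv
  have hpt : ∀ j, Tendsto (fun k => (inner ℝ (u j) (u (φ k)) : ℝ)) atTop (𝓝 (g j)) :=
    fun j => hconv j
  -- convergence on the span
  have hspan : ∀ w ∈ Submodule.span ℝ (Set.range u),
      ∃ L : ℝ, Tendsto (fun k => (inner ℝ w (u (φ k)) : ℝ)) atTop (𝓝 L) := by
    intro w hw
    induction hw using Submodule.span_induction with
    | mem x hx =>
      obtain ⟨j, rfl⟩ := hx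
      exact ⟨g j, hpt j⟩
    | zero => exact ⟨0, by simp [inner_zero_left]⟩
    | add x z _ _ hx hz =>
      obtain ⟨L1, h1⟩ := hx; obtain ⟨L2, h2⟩ := hz
      exact ⟨L1 + L2, by simpa [inner_add_left] using h1.add h2⟩
    | smul a x _ hx =>
      obtain ⟨L, h⟩ := hx
      exact ⟨a * L, by simpa [real_inner_smul_left] using h.const_mul a⟩
  set K := (Submodule.span ℝ (Set.range u)).topologicalClosure with hK
  haveI : CompleteSpace K := (Submodule.isClosed_topologicalClosure _).completeSpace_coe
  -- Cauchy on the closure of the span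
  have hclos : ∀ w ∈ K, CauchySeq (fun k => (inner ℝ w (u (φ k)) : ℝ)) := by
    intro w hw
    rw [Metric.cauchySeq_iff]
    intro ε hε
    obtain ⟨w', hw', hww'⟩ : ∃ w' ∈ Submodule.span ℝ (Set.range u),
        ‖w - w'‖ < ε / (3 * (B + 1)) := by
      have hwc : w ∈ closure ((Submodule.span ℝ (Set.range u) : Submodule ℝ U) : Set U) := by
        rw [← Submodule.topologicalClosure_coe]; exact hw
      rcases Metric.mem_closure_iff.mp hwc (ε / (3 * (B + 1))) (by positivity) with ⟨w', hw', hd⟩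
      exact ⟨w', hw', by rwa [dist_eq_norm] at hd⟩
    obtain ⟨L, hL⟩ := hspan w' hw'
    have hc := hL.cauchySeq
    rw [Metric.cauchySeq_iff] at hc
    obtain ⟨N, hN⟩ := hc (ε / 3) (by positivity)
    refine ⟨N, fun m hm n hn => ?_⟩
    have key : ∀ k, |(inner ℝ w (u (φ k)) : ℝ) - inner ℝ w' (u (φ k))| ≤ ε / 3 := by
      intro k
      have h1 : |(inner ℝ (w - w') (u (φ k)) : ℝ)| ≤ ‖w - w'‖ * ‖u (φ k)‖ :=
        abs_real_inner_le_norm _ _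
      have h2 : ‖w - w'‖ * ‖u (φ k)‖ ≤ ε / (3 * (B + 1)) * B := by
        apply mul_le_mul hww'.le (hB _) (norm_nonneg _) (by positivity)
      have h3 : ε / (3 * (B + 1)) * B ≤ ε / 3 := by
        rw [div_mul_eq_mul_div, div_le_div_iff₀ (by positivity) (by norm_num)]
        nlinarith
      have h4 : (inner ℝ (w - w') (u (φ k)) : ℝ) = inner ℝ w (u (φ k)) - inner ℝ w' (u (φ k)) :=
        inner_sub_left _ _ _
      rw [h4] at h1
      linarith [le_trans h1 (le_trans h2 h3)]
    have hmn := hN m hm n hn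
    rw [Real.dist_eq] at hmn ⊢
    have km := key m; have kn := key n
    have habs : |(inner ℝ w (u (φ m)) : ℝ) - inner ℝ w (u (φ n))| ≤
        |(inner ℝ w (u (φ m)) : ℝ) - inner ℝ w' (u (φ m))| +
        |(inner ℝ w' (u (φ m)) : ℝ) - inner ℝ w' (u (φ n))| +
        |(inner ℝ w' (u (φ n)) : ℝ) - inner ℝ w (u (φ n))| := by
      linarith [abs_sub_le ((inner ℝ w (u (φ m)) : ℝ)) (inner ℝ w' (u (φ m))) (inner ℝ w (u (φ n))),
        abs_sub_le ((inner ℝ w' (u (φ m)) : ℝ)) (inner ℝ w' (u (φ n))) (inner ℝ w (u (φ n)))]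
    rw [abs_sub_comm ((inner ℝ w' (u (φ n)) : ℝ))] at habs
    linarith
  -- Cauchy for every w, by orthogonal projection
  have hcau : ∀ w : U, CauchySeq (fun k => (inner ℝ w (u (φ k)) : ℝ)) := by
    intro w
    have hu_mem : ∀ k, u (φ k) ∈ K :=
      fun k => Submodule.le_topologicalClosure _ (Submodule.subset_span ⟨φ k, rfl⟩)
    set P : U := (K.orthogonalProjectionOnto w : U) with hP
    have hperp : w - P ∈ Kᗮ := Submodule.sub_starProjection_mem_orthogonal w
    have heq : (fun k => (inner ℝ w (u (φ k)) : ℝ)) = fun k => (inner ℝ P (u (φ k)) : ℝ) := by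
      funext k
      have h0 : (inner ℝ (u (φ k)) (w - P) : ℝ) = 0 :=
        (Submodule.mem_orthogonal K _).mp hperp _ (hu_mem k)
      have h1 : (inner ℝ (w - P) (u (φ k)) : ℝ) = 0 := by rw [real_inner_comm]; exact h0
      have h2 : (inner ℝ (w - P) (u (φ k)) : ℝ) = inner ℝ w (u (φ k)) - inner ℝ P (u (φ k)) :=
        inner_sub_left _ _ _
      linarith [h2 ▸ h1]
    rw [heq]
    exact hclos P (K.orthogonalProjectionOnto w).2
  have hlim : ∀ w : U, ∃ L : ℝ, Tendsto (fun k => (inner ℝ w (u (φ k)) : ℝ)) atTop (𝓝 L) :=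
    fun w => cauchySeq_tendsto_of_complete (hcau w)
  choose L hLt using hlim
  have hadd : ∀ w1 w2 : U, L (w1 + w2) = L w1 + L w2 := fun w1 w2 =>
    tendsto_nhds_unique (hLt _) (by simpa [inner_add_left] using (hLt w1).add (hLt w2))
  have hsmul : ∀ (a : ℝ) (w : U), L (a • w) = a * L w := fun a w =>
    tendsto_nhds_unique (hLt _) (by simpa [real_inner_smul_left] using (hLt w).const_mul a)
  have hbound : ∀ w : U, ‖L w‖ ≤ B * ‖w‖ := by
    intro w
    rw [Real.norm_eq_abs]
    refine le_of_tendsto (hLt w).abs (Eventually.of_forall fun k => ?_)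
    have h1 : |(inner ℝ w (u (φ k)) : ℝ)| ≤ ‖w‖ * ‖u (φ k)‖ := abs_real_inner_le_norm _ _
    have h2 : ‖w‖ * ‖u (φ k)‖ ≤ ‖w‖ * B :=
      mul_le_mul_of_nonneg_left (hB _) (norm_nonneg _)
    calc |(inner ℝ w (u (φ k)) : ℝ)| ≤ ‖w‖ * B := le_trans h1 h2
      _ = B * ‖w‖ := mul_comm _ _
  let f : U →ₗ[ℝ] ℝ :=
    { toFun := L, map_add' := hadd, map_smul' := hsmul }
  let f' : U →L[ℝ] ℝ := LinearMap.mkContinuous f B hbound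
  refine ⟨(InnerProductSpace.toDual ℝ U).symm f', fun w => ?_⟩
  have hx : (inner ℝ ((InnerProductSpace.toDual ℝ U).symm f') w : ℝ) = f' w :=
    InnerProductSpace.toDual_symm_apply
  have h2 : (inner ℝ w ((InnerProductSpace.toDual ℝ U).symm f') : ℝ) = L w := by
    rw [real_inner_comm]; exact hx
  simp only [Function.comp_apply, Function.comp]
  rw [h2]
  exact hLt w

set_option maxHeartbeats 1000000 in
/-- Fix `α > 0` and `y ∈ V`. For every sequence `(y_k)` converging in norm
to `y` and every sequence `(u_k)` of minimizers of `T_{α,y_k}`, the sequence `(u_k)` has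
a weakly convergent subsequence, and every weak limit point of `(u_k)` is a minimizer
of `T_{α,y}`. -/
theorem tikhonov_stability
    {U V : Type*} [NormedAddCommGroup U] [InnerProductSpace ℝ U] [CompleteSpace U]
    [NormedAddCommGroup V] [InnerProductSpace ℝ V] [CompleteSpace V]
    (F : U →L[ℝ] V) (R : U → ℝ≥0∞)
    (hproper : ∃ u : U, R u ≠ ⊤)
    (hconvex : ∀ u v : U, ∀ t : ℝ, 0 ≤ t → t ≤ 1 →
      R (t • u + (1 - t) • v) ≤ ENNReal.ofReal t * R u + ENNReal.ofReal (1 - t) * R v)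
    (hlsc : ∀ (u : ℕ → U) (x : U), WeakConv u x →
      R x ≤ atTop.liminf (fun k => R (u k)))
    (hbdd : ∀ α : ℝ, 0 < α → ∀ y : V, ∀ C : ℝ, 0 < C →
      Bornology.IsBounded {u : U | Tik F R α y u ≤ ENNReal.ofReal C})
    (α : ℝ) (hα : 0 < α) (y : V)
    (ySeq : ℕ → V) (hy : Tendsto ySeq atTop (nhds y))
    (u : ℕ → U)
    (hmin : ∀ k : ℕ, ∀ w : U, Tik F R α (ySeq k) (u k) ≤ Tik F R α (ySeq k) w) :
    (∃ φ : ℕ → ℕ, StrictMono φ ∧ ∃ x : U, WeakConv (u ∘ φ) x) ∧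
    (∀ x : U, (∃ φ : ℕ → ℕ, StrictMono φ ∧ WeakConv (u ∘ φ) x) →
      ∀ w : U, Tik F R α y x ≤ Tik F R α y w) := by
  obtain ⟨u₀, hu₀⟩ := hproper
  have htnorm : Tendsto (fun k => ‖ySeq k - y‖) atTop (𝓝 0) := by
    have := (hy.sub (tendsto_const_nhds (x := y))).norm
    simpa using this
  obtain ⟨D, hD⟩ : ∃ D, ∀ k, ‖ySeq k - y‖ ≤ D := by
    obtain ⟨D, hD⟩ := htnorm.bddAbove_range
    exact ⟨D, fun k => hD ⟨k, rfl⟩⟩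
  have hD0 : 0 ≤ D := le_trans (norm_nonneg _) (hD 0)
  obtain ⟨r0, hr0def⟩ : ∃ c : ℝ, c = (R u₀).toReal := ⟨_, rfl⟩
  have hr0 : R u₀ = ENNReal.ofReal r0 := by rw [hr0def]; exact (ENNReal.ofReal_toReal hu₀).symm
  have hr0nn : 0 ≤ r0 := hr0def ▸ ENNReal.toReal_nonneg
  obtain ⟨M0, hM0def⟩ : ∃ c : ℝ, c = ‖F u₀ - y‖ + D := ⟨_, rfl⟩
  have hM0nn : 0 ≤ M0 := hM0def ▸ add_nonneg (norm_nonneg _) hD0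
  obtain ⟨C0, hC0def⟩ : ∃ c : ℝ, c = 2⁻¹ * M0 ^ 2 + α * r0 := ⟨_, rfl⟩
  have hC0 : 0 ≤ C0 := hC0def ▸ add_nonneg (by positivity) (mul_nonneg hα.le hr0nn)
  have hT0 : ∀ k, Tik F R α (ySeq k) u₀ ≤ ENNReal.ofReal C0 := by
    intro k
    unfold Tik
    rw [hr0, hC0def, ← ENNReal.ofReal_mul hα.le,
      ← ENNReal.ofReal_add (by positivity) (mul_nonneg hα.le hr0nn)]
    apply ENNReal.ofReal_le_ofReal
    have h1 : ‖F u₀ - ySeq k‖ ≤ M0 := by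
      have := norm_sub_le_norm_sub_add_norm_sub (F u₀) y (ySeq k)
      have h2 : ‖y - ySeq k‖ = ‖ySeq k - y‖ := norm_sub_rev _ _
      have := hD k
      rw [hM0def] at *; linarith
    have := norm_nonneg (F u₀ - ySeq k)
    have : 2⁻¹ * ‖F u₀ - ySeq k‖ ^ 2 ≤ 2⁻¹ * M0 ^ 2 := by nlinarith
    linarith
  have hTk : ∀ k, Tik F R α (ySeq k) (u k) ≤ ENNReal.ofReal C0 :=
    fun k => (hmin k u₀).trans (hT0 k)
  obtain ⟨M, hMdef⟩ : ∃ c : ℝ, c = Real.sqrt (2 * C0) := ⟨_, rfl⟩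
  have hMnn : 0 ≤ M := hMdef ▸ Real.sqrt_nonneg _
  have hM : ∀ k, ‖F (u k) - ySeq k‖ ≤ M := by
    intro k
    have h1 : ENNReal.ofReal (2⁻¹ * ‖F (u k) - ySeq k‖ ^ 2) ≤ ENNReal.ofReal C0 :=
      le_trans le_self_add (hTk k)
    have h2 : 2⁻¹ * ‖F (u k) - ySeq k‖ ^ 2 ≤ C0 :=
      (ENNReal.ofReal_le_ofReal_iff hC0).mp h1
    have h3 : ‖F (u k) - ySeq k‖ ^ 2 ≤ 2 * C0 := by linarith
    rw [hMdef, Real.le_sqrt (norm_nonneg _) (by linarith)]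
    exact h3
  obtain ⟨C, hCdef⟩ : ∃ c : ℝ, c = 2⁻¹ * (M + D) ^ 2 + C0 + 1 := ⟨_, rfl⟩
  have hC : 0 < C := by rw [hCdef]; positivity
  have hTy : ∀ k, Tik F R α y (u k) ≤ ENNReal.ofReal C := by
    intro k
    have h1 : ‖F (u k) - y‖ ≤ M + D := by
      have := norm_sub_le_norm_sub_add_norm_sub (F (u k)) (ySeq k) y
      have := hM k; have := hD k; linarith
    have h2 : ENNReal.ofReal (2⁻¹ * ‖F (u k) - y‖ ^ 2) ≤ ENNReal.ofReal (2⁻¹ * (M + D) ^ 2) :=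
      ENNReal.ofReal_le_ofReal (by nlinarith [norm_nonneg (F (u k) - y)])
    have h3 : ENNReal.ofReal α * R (u k) ≤ ENNReal.ofReal C0 :=
      le_trans le_add_self (hTk k)
    calc Tik F R α y (u k)
        = ENNReal.ofReal (2⁻¹ * ‖F (u k) - y‖ ^ 2) + ENNReal.ofReal α * R (u k) := by
          simp only [Tik]
      _ ≤ ENNReal.ofReal (2⁻¹ * (M + D) ^ 2) + ENNReal.ofReal C0 := add_le_add h2 h3
      _ ≤ ENNReal.ofReal C := by
          rw [← ENNReal.ofReal_add (by positivity) hC0]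
          exact ENNReal.ofReal_le_ofReal (by rw [hCdef]; linarith)
  obtain ⟨B, hBmem⟩ := isBounded_iff_forall_norm_le.mp (hbdd α hα y C hC)
  have hBu : ∀ k, ‖u k‖ ≤ B := fun k => hBmem _ (hTy k)
  constructor
  · exact my_weak_compact u B hBu
  -- Part 2: every weak limit point is a minimizer
  rintro x ⟨φ, hφ, hwc⟩ w
  have htφ : Tendsto (fun k => ‖ySeq (φ k) - y‖) atTop (𝓝 0) :=
    htnorm.comp hφ.tendsto_atTop
  -- weak convergence of F (u (φ k)) to F x, tested against z := F x - y
  have hFw : Tendsto (fun k => (inner ℝ (F x - y) (F (u (φ k))) : ℝ)) atTop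
      (𝓝 (inner ℝ (F x - y) (F x) : ℝ)) := by
    have h := hwc (ContinuousLinearMap.adjoint F (F x - y))
    simp only [Function.comp_apply, Function.comp,
      ContinuousLinearMap.adjoint_inner_left] at h
    exact h
  have h_inner : Tendsto (fun k => (inner ℝ (F x - y) (F (u (φ k)) - y) : ℝ)) atTop
      (𝓝 (‖F x - y‖ ^ 2)) := by
    have h2 := hFw.sub_const ((inner ℝ (F x - y) y : ℝ))
    have h3 : ∀ k, (inner ℝ (F x - y) (F (u (φ k)) - y) : ℝ)
        = inner ℝ (F x - y) (F (u (φ k))) - inner ℝ (F x - y) y :=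
      fun k => inner_sub_right _ _ _
    have h4 : (inner ℝ (F x - y) (F x) : ℝ) - inner ℝ (F x - y) y = ‖F x - y‖ ^ 2 := by
      rw [← inner_sub_right]
      exact real_inner_self_eq_norm_sq _
    rw [← h4]
    simpa only [h3] using h2
  -- weak lower semicontinuity of the data-misfit term
  have h1 : ENNReal.ofReal (2⁻¹ * ‖F x - y‖ ^ 2) ≤
      atTop.liminf (fun k => ENNReal.ofReal (2⁻¹ * ‖F (u (φ k)) - y‖ ^ 2)) := by
    have hle : ∀ k, ENNReal.ofReal ((inner ℝ (F x - y) (F (u (φ k)) - y) : ℝ)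
        - 2⁻¹ * ‖F x - y‖ ^ 2) ≤ ENNReal.ofReal (2⁻¹ * ‖F (u (φ k)) - y‖ ^ 2) := by
      intro k
      apply ENNReal.ofReal_le_ofReal
      nlinarith [norm_sub_sq_real (F (u (φ k)) - y) (F x - y), sq_nonneg ‖F (u (φ k)) - y - (F x - y)‖,
        real_inner_comm (F (u (φ k)) - y) (F x - y)]
    have htend : Tendsto (fun k => ENNReal.ofReal ((inner ℝ (F x - y) (F (u (φ k)) - y) : ℝ)
        - 2⁻¹ * ‖F x - y‖ ^ 2)) atTop (𝓝 (ENNReal.ofReal (2⁻¹ * ‖F x - y‖ ^ 2))) := by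
      have h := ENNReal.tendsto_ofReal (h_inner.sub_const (2⁻¹ * ‖F x - y‖ ^ 2))
      have he : ‖F x - y‖ ^ 2 - 2⁻¹ * ‖F x - y‖ ^ 2 = 2⁻¹ * ‖F x - y‖ ^ 2 := by ring
      rwa [he] at h
    calc ENNReal.ofReal (2⁻¹ * ‖F x - y‖ ^ 2)
        = atTop.liminf (fun k => ENNReal.ofReal ((inner ℝ (F x - y) (F (u (φ k)) - y) : ℝ)
            - 2⁻¹ * ‖F x - y‖ ^ 2)) := (htend.liminf_eq).symm
      _ ≤ _ := liminf_le_liminf (Eventually.of_forall hle)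
  -- weak lower semicontinuity of the regularizer term
  have h2 : ENNReal.ofReal α * R x ≤
      atTop.liminf (fun k => ENNReal.ofReal α * R (u (φ k))) := by
    calc ENNReal.ofReal α * R x
        ≤ ENNReal.ofReal α * atTop.liminf (fun k => R ((u ∘ φ) k)) :=
          mul_le_mul_right (hlsc (u ∘ φ) x hwc) _
      _ = atTop.liminf (fun _ : ℕ => ENNReal.ofReal α) * atTop.liminf (fun k => R (u (φ k))) := by
          rw [liminf_const]; rfl
      _ ≤ atTop.liminf ((fun _ : ℕ => ENNReal.ofReal α) * (fun k => R (u (φ k)))) :=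
          ENNReal.le_liminf_mul
      _ = atTop.liminf (fun k => ENNReal.ofReal α * R (u (φ k))) := rfl
  have h3 : Tik F R α y x ≤ atTop.liminf (fun k => Tik F R α y (u (φ k))) :=
    le_trans (add_le_add h1 h2) (my_liminf_add _ _)
  -- comparison of the Tikhonov functionals for nearby data
  have h4 : ∀ k, Tik F R α y (u (φ k)) ≤ Tik F R α y w +
      ENNReal.ofReal (‖F w - y‖ * ‖ySeq (φ k) - y‖ + 2⁻¹ * ‖ySeq (φ k) - y‖ ^ 2
        + (M * ‖ySeq (φ k) - y‖ + 2⁻¹ * ‖ySeq (φ k) - y‖ ^ 2)) := by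
    intro k
    have ht0 : 0 ≤ ‖ySeq (φ k) - y‖ := norm_nonneg _
    have hbnn : 0 ≤ M * ‖ySeq (φ k) - y‖ + 2⁻¹ * ‖ySeq (φ k) - y‖ ^ 2 :=
      add_nonneg (mul_nonneg hMnn ht0) (by positivity)
    have hcnn : 0 ≤ ‖F w - y‖ * ‖ySeq (φ k) - y‖ + 2⁻¹ * ‖ySeq (φ k) - y‖ ^ 2 :=
      add_nonneg (mul_nonneg (norm_nonneg _) ht0) (by positivity)
    have ha : 2⁻¹ * ‖F (u (φ k)) - y‖ ^ 2 ≤ 2⁻¹ * ‖F (u (φ k)) - ySeq (φ k)‖ ^ 2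
        + (M * ‖ySeq (φ k) - y‖ + 2⁻¹ * ‖ySeq (φ k) - y‖ ^ 2) := by
      have htri : ‖F (u (φ k)) - y‖ ≤ ‖F (u (φ k)) - ySeq (φ k)‖ + ‖ySeq (φ k) - y‖ :=
        norm_sub_le_norm_sub_add_norm_sub _ _ _
      nlinarith [hM (φ k), norm_nonneg (F (u (φ k)) - y),
        norm_nonneg (F (u (φ k)) - ySeq (φ k))]
    have hb : 2⁻¹ * ‖F w - ySeq (φ k)‖ ^ 2 ≤ 2⁻¹ * ‖F w - y‖ ^ 2
        + (‖F w - y‖ * ‖ySeq (φ k) - y‖ + 2⁻¹ * ‖ySeq (φ k) - y‖ ^ 2) := by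
      have htri : ‖F w - ySeq (φ k)‖ ≤ ‖F w - y‖ + ‖y - ySeq (φ k)‖ :=
        norm_sub_le_norm_sub_add_norm_sub _ _ _
      have hrev : ‖y - ySeq (φ k)‖ = ‖ySeq (φ k) - y‖ := norm_sub_rev _ _
      rw [hrev] at htri
      nlinarith [norm_nonneg (F w - ySeq (φ k)), norm_nonneg (F w - y)]
    have step1 : ENNReal.ofReal (2⁻¹ * ‖F (u (φ k)) - y‖ ^ 2) ≤
        ENNReal.ofReal (2⁻¹ * ‖F (u (φ k)) - ySeq (φ k)‖ ^ 2)
        + ENNReal.ofReal (M * ‖ySeq (φ k) - y‖ + 2⁻¹ * ‖ySeq (φ k) - y‖ ^ 2) := by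
      rw [← ENNReal.ofReal_add (by positivity) hbnn]
      exact ENNReal.ofReal_le_ofReal ha
    have step2 : ENNReal.ofReal (2⁻¹ * ‖F w - ySeq (φ k)‖ ^ 2) ≤
        ENNReal.ofReal (2⁻¹ * ‖F w - y‖ ^ 2)
        + ENNReal.ofReal (‖F w - y‖ * ‖ySeq (φ k) - y‖ + 2⁻¹ * ‖ySeq (φ k) - y‖ ^ 2) := by
      rw [← ENNReal.ofReal_add (by positivity) hcnn]
      exact ENNReal.ofReal_le_ofReal hb
    calc Tik F R α y (u (φ k))
        = ENNReal.ofReal (2⁻¹ * ‖F (u (φ k)) - y‖ ^ 2)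
          + ENNReal.ofReal α * R (u (φ k)) := by simp only [Tik]
      _ ≤ (ENNReal.ofReal (2⁻¹ * ‖F (u (φ k)) - ySeq (φ k)‖ ^ 2)
          + ENNReal.ofReal (M * ‖ySeq (φ k) - y‖ + 2⁻¹ * ‖ySeq (φ k) - y‖ ^ 2))
          + ENNReal.ofReal α * R (u (φ k)) := add_le_add_left step1 _
      _ = Tik F R α (ySeq (φ k)) (u (φ k))
          + ENNReal.ofReal (M * ‖ySeq (φ k) - y‖ + 2⁻¹ * ‖ySeq (φ k) - y‖ ^ 2) := by
          simp only [Tik]; ring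
      _ ≤ Tik F R α (ySeq (φ k)) w
          + ENNReal.ofReal (M * ‖ySeq (φ k) - y‖ + 2⁻¹ * ‖ySeq (φ k) - y‖ ^ 2) :=
          add_le_add_left (hmin (φ k) w) _
      _ = (ENNReal.ofReal (2⁻¹ * ‖F w - ySeq (φ k)‖ ^ 2) + ENNReal.ofReal α * R w)
          + ENNReal.ofReal (M * ‖ySeq (φ k) - y‖ + 2⁻¹ * ‖ySeq (φ k) - y‖ ^ 2) := by
          simp only [Tik]
      _ ≤ ((ENNReal.ofReal (2⁻¹ * ‖F w - y‖ ^ 2)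
          + ENNReal.ofReal (‖F w - y‖ * ‖ySeq (φ k) - y‖ + 2⁻¹ * ‖ySeq (φ k) - y‖ ^ 2))
          + ENNReal.ofReal α * R w)
          + ENNReal.ofReal (M * ‖ySeq (φ k) - y‖ + 2⁻¹ * ‖ySeq (φ k) - y‖ ^ 2) :=
          add_le_add_left (add_le_add_left step2 _) _
      _ = Tik F R α y w
          + (ENNReal.ofReal (‖F w - y‖ * ‖ySeq (φ k) - y‖ + 2⁻¹ * ‖ySeq (φ k) - y‖ ^ 2)
          + ENNReal.ofReal (M * ‖ySeq (φ k) - y‖ + 2⁻¹ * ‖ySeq (φ k) - y‖ ^ 2)) := by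
          simp only [Tik]; ring
      _ = Tik F R α y w + ENNReal.ofReal (‖F w - y‖ * ‖ySeq (φ k) - y‖
          + 2⁻¹ * ‖ySeq (φ k) - y‖ ^ 2 + (M * ‖ySeq (φ k) - y‖
          + 2⁻¹ * ‖ySeq (φ k) - y‖ ^ 2)) := by
          rw [← ENNReal.ofReal_add hcnn hbnn]
  -- the error term tends to zero
  have h5 : Tendsto (fun k => Tik F R α y w +
      ENNReal.ofReal (‖F w - y‖ * ‖ySeq (φ k) - y‖ + 2⁻¹ * ‖ySeq (φ k) - y‖ ^ 2
        + (M * ‖ySeq (φ k) - y‖ + 2⁻¹ * ‖ySeq (φ k) - y‖ ^ 2))) atTop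
      (𝓝 (Tik F R α y w)) := by
    have hp : Continuous (fun s : ℝ => ‖F w - y‖ * s + 2⁻¹ * s ^ 2 + (M * s + 2⁻¹ * s ^ 2)) := by
      fun_prop
    have hη : Tendsto (fun k => ‖F w - y‖ * ‖ySeq (φ k) - y‖ + 2⁻¹ * ‖ySeq (φ k) - y‖ ^ 2
        + (M * ‖ySeq (φ k) - y‖ + 2⁻¹ * ‖ySeq (φ k) - y‖ ^ 2)) atTop (𝓝 0) := by
      have := (hp.tendsto 0).comp htφ
      simpa [Function.comp_def] using this
    have := (tendsto_const_nhds (x := Tik F R α y w)).add (ENNReal.tendsto_ofReal hη)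
    simpa using this
  calc Tik F R α y x ≤ atTop.liminf (fun k => Tik F R α y (u (φ k))) := h3
    _ ≤ atTop.liminf (fun k => Tik F R α y w +
        ENNReal.ofReal (‖F w - y‖ * ‖ySeq (φ k) - y‖ + 2⁻¹ * ‖ySeq (φ k) - y‖ ^ 2
          + (M * ‖ySeq (φ k) - y‖ + 2⁻¹ * ‖ySeq (φ k) - y‖ ^ 2))) :=
        liminf_le_liminf (Eventually.of_forall h4)
    _ = Tik F R α y w := h5.liminf_eq
end

section
/- Suppose u† ∈ U satisfies F u† = y and R(u†) < ∞, and the source condition holds: there exists ω ∈ V with ξ = F* ω and R(u) ≥ R(u†) + ⟨ξ, u − u†⟩ for all u ∈ U. Fix c > 0 and for each δ > 0 choose α = c·δ. Then there is a constant C > 0 such that for all δ > 0, all y^δ ∈ V with ‖y − y^δ‖ ≤ δ, and every minimizer u_α^δ of T_{α,y^δ} with R(u_α^δ) < ∞, the Bregman distance satisfies D_ξ(u_α^δ, u†) ≤ C·δ. -/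
open Filter Topology ENNReal

/-- The Bregman distance `D_ξ(ũ, u) = R(ũ) − R(u) − ⟨ξ, ũ − u⟩` (for `R` finite at
both points, expressed via `ENNReal.toReal`). -/
noncomputable def Breg {U : Type*} [NormedAddCommGroup U] [InnerProductSpace ℝ U]
    (R : U → ℝ≥0∞) (ξ : U) (utilde u : U) : ℝ :=
  (R utilde).toReal - (R u).toReal - (inner ℝ ξ (utilde - u) : ℝ)

/-- Under the source condition `ξ = F* ω ∈ ∂R(u†)` and the parameter
choice `α = c·δ`, the Bregman distance of any minimizer `u_α^δ` of `T_{α,y^δ}` (with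
`R(u_α^δ) < ∞`) to `u†` is bounded by `C·δ`. -/
theorem tikhonov_convergence_rate_bregman
    {U V : Type*} [NormedAddCommGroup U] [InnerProductSpace ℝ U] [CompleteSpace U]
    [NormedAddCommGroup V] [InnerProductSpace ℝ V] [CompleteSpace V]
    (F : U →L[ℝ] V) (R : U → ℝ≥0∞)
    (hproper : ∃ u : U, R u ≠ ⊤)
    (hconvex : ∀ u v : U, ∀ t : ℝ, 0 ≤ t → t ≤ 1 →
      R (t • u + (1 - t) • v) ≤ ENNReal.ofReal t * R u + ENNReal.ofReal (1 - t) * R v)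
    (y : V) (udag : U) (hsol : F udag = y) (hfin : R udag ≠ ⊤)
    (ω : V) (ξ : U) (hξ : ξ = (ContinuousLinearMap.adjoint F) ω)
    (hsource : ∀ u : U,
      ENNReal.ofReal ((R udag).toReal + (inner ℝ ξ (u - udag) : ℝ)) ≤ R u)
    (c : ℝ) (hc : 0 < c) :
    ∃ C : ℝ, 0 < C ∧ ∀ δ : ℝ, 0 < δ → ∀ yδ : V, ‖y - yδ‖ ≤ δ →
      ∀ uαδ : U, (∀ w : U, Tik F R (c * δ) yδ uαδ ≤ Tik F R (c * δ) yδ w) →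
        R uαδ ≠ ⊤ → Breg R ξ uαδ udag ≤ C * δ := by
  refine ⟨(2*c)⁻¹ + c*‖ω‖^2/2 + ‖ω‖ + 1, by positivity, ?_⟩
  intro δ hδ yδ hyδ u hmin hufin
  have hα : 0 < c * δ := mul_pos hc hδ
  -- extract real inequality from minimality at udag
  have hm := hmin udag
  set a := ‖F u - yδ‖ with ha
  set b := ‖ω‖ with hb
  have hRu : R u ≠ ⊤ := hufin
  have hfin1 : Tik F R (c*δ) yδ u ≠ ⊤ := by
    simp [Tik, ENNReal.add_ne_top, ENNReal.mul_ne_top, hRu]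
  have hfin2 : Tik F R (c*δ) yδ udag ≠ ⊤ := by
    simp [Tik, ENNReal.add_ne_top, ENNReal.mul_ne_top, hfin]
  have hmR := ENNReal.toReal_mono hfin2 hm
  have htr : ∀ (w : U), R w ≠ ⊤ → (Tik F R (c*δ) yδ w).toReal
      = 2⁻¹ * ‖F w - yδ‖^2 + (c*δ) * (R w).toReal := by
    intro w hw
    rw [Tik, ENNReal.toReal_add ENNReal.ofReal_ne_top (ENNReal.mul_ne_top ENNReal.ofReal_ne_top hw),
      ENNReal.toReal_mul, ENNReal.toReal_ofReal (by positivity),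
      ENNReal.toReal_ofReal hα.le]
  rw [htr u hRu, htr udag hfin] at hmR
  have hud : F udag - yδ = y - yδ := by rw [hsol]
  have hud2 : ‖F udag - yδ‖ ≤ δ := by rw [hud]; exact hyδ
  have h1 : 2⁻¹ * a^2 + (c*δ) * (R u).toReal ≤ 2⁻¹ * δ^2 + (c*δ) * (R udag).toReal := by
    nlinarith [norm_nonneg (F udag - yδ)]
  -- inner product bound
  have hip : (inner ℝ ξ (u - udag) : ℝ) = (inner ℝ ω (F u - y) : ℝ) := by
    rw [hξ, ContinuousLinearMap.adjoint_inner_left, map_sub, hsol]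
  have hip2 : -(inner ℝ ξ (u - udag) : ℝ) ≤ b * (a + δ) := by
    rw [hip]
    have h3 : ‖F u - y‖ ≤ a + δ := by
      calc ‖F u - y‖ = ‖(F u - yδ) + (yδ - y)‖ := by rw [sub_add_sub_cancel]
        _ ≤ ‖F u - yδ‖ + ‖yδ - y‖ := norm_add_le _ _
        _ ≤ a + δ := by rw [← norm_neg (yδ - y)]; simp only [neg_sub]; linarith
    calc -(inner ℝ ω (F u - y) : ℝ) ≤ |(inner ℝ ω (F u - y) : ℝ)| := neg_le_abs _
      _ ≤ ‖ω‖ * ‖F u - y‖ := abs_real_inner_le_norm _ _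
      _ ≤ b * (a + δ) := by apply mul_le_mul_of_nonneg_left h3 (norm_nonneg ω)
  -- conclude
  rw [Breg]
  have hb0 : (0:ℝ) ≤ b := norm_nonneg ω
  have ha0 : (0:ℝ) ≤ a := norm_nonneg _
  have hCδ : ((2*c)⁻¹ + c*b^2/2 + b + 1) * δ = δ/(2*c) + c*δ*b^2/2 + b*δ + δ := by
    field_simp
  rw [hCδ]
  have h5 : c*δ*(δ/(2*c)) = 2⁻¹*δ^2 := by field_simp
  rw [← mul_le_mul_iff_right₀ hα]
  have hip3 := mul_le_mul_of_nonneg_left hip2 hα.le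
  nlinarith [sq_nonneg (a - c*δ*b)]
end

section
/- Suppose u† ∈ U satisfies F u† = y and R(u†) < ∞, and the source condition holds: there exists ω ∈ V with ξ = F* ω and R(u) ≥ R(u†) + ⟨ξ, u − u†⟩ for all u ∈ U. Fix c > 0 and for each δ > 0 choose α = c·δ. Then there is a constant C > 0 such that for all δ > 0, all y^δ ∈ V with ‖y − y^δ‖ ≤ δ, and every minimizer u_α^δ of T_{α,y^δ}, the residual satisfies ‖F u_α^δ − y^δ‖ ≤ C·δ. -/
open Filter Topology ENNReal

set_option maxHeartbeats 1000000 in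
/-- Under the source condition `ξ = F* ω ∈ ∂R(u†)` and the parameter
choice `α = c·δ`, the residual `‖F u_α^δ − y^δ‖` of any minimizer `u_α^δ` of
`T_{α,y^δ}` is bounded by `C·δ`. -/
theorem tikhonov_convergence_rate_residual
    {U V : Type*} [NormedAddCommGroup U] [InnerProductSpace ℝ U] [CompleteSpace U]
    [NormedAddCommGroup V] [InnerProductSpace ℝ V] [CompleteSpace V]
    (F : U →L[ℝ] V) (R : U → ℝ≥0∞)
    (hproper : ∃ u : U, R u ≠ ⊤)
    (hconvex : ∀ u v : U, ∀ t : ℝ, 0 ≤ t → t ≤ 1 →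
      R (t • u + (1 - t) • v) ≤ ENNReal.ofReal t * R u + ENNReal.ofReal (1 - t) * R v)
    (y : V) (udag : U) (hsol : F udag = y) (hfin : R udag ≠ ⊤)
    (ω : V) (ξ : U) (hξ : ξ = (ContinuousLinearMap.adjoint F) ω)
    (hsource : ∀ u : U,
      ENNReal.ofReal ((R udag).toReal + (inner ℝ ξ (u - udag) : ℝ)) ≤ R u)
    (c : ℝ) (hc : 0 < c) :
    ∃ C : ℝ, 0 < C ∧ ∀ δ : ℝ, 0 < δ → ∀ yδ : V, ‖y - yδ‖ ≤ δ →
      ∀ uαδ : U, (∀ w : U, Tik F R (c * δ) yδ uαδ ≤ Tik F R (c * δ) yδ w) →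
        ‖F uαδ - yδ‖ ≤ C * δ := by

  refine ⟨Real.sqrt (2 + 4*c*‖ω‖ + 4*c^2*‖ω‖^2), Real.sqrt_pos.mpr (by positivity), ?_⟩
  intro δ hδ yδ hy uαδ hmin
  set α := c * δ with hαdef
  have hα : 0 < α := mul_pos hc hδ
  set r := ‖F uαδ - yδ‖ with hrdef
  have hr0 : 0 ≤ r := norm_nonneg _
  have hTfin : Tik F R α yδ udag ≠ ⊤ := by
    simp only [Tik]
    exact ENNReal.add_ne_top.mpr ⟨ENNReal.ofReal_ne_top,
      ENNReal.mul_ne_top ENNReal.ofReal_ne_top hfin⟩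
  have hle := hmin udag
  have hTufin : Tik F R α yδ uαδ ≠ ⊤ := ne_top_of_le_ne_top hTfin hle
  have hRufin : R uαδ ≠ ⊤ := by
    intro h
    apply hTufin
    simp [Tik, h, ENNReal.mul_top (ENNReal.ofReal_pos.mpr hα).ne']
  set A := (R udag).toReal with hA
  set B := (R uαδ).toReal with hB
  have hA0 : 0 ≤ A := ENNReal.toReal_nonneg
  have hB0 : 0 ≤ B := ENNReal.toReal_nonneg
  -- real form of minimality
  have key : 2⁻¹ * r^2 + α * B ≤ 2⁻¹ * ‖F udag - yδ‖^2 + α * A := by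
    have h := (ENNReal.toReal_le_toReal hTufin hTfin).mpr hle
    rw [Tik, Tik, ENNReal.toReal_add ENNReal.ofReal_ne_top
        (ENNReal.mul_ne_top ENNReal.ofReal_ne_top hRufin),
      ENNReal.toReal_add ENNReal.ofReal_ne_top
        (ENNReal.mul_ne_top ENNReal.ofReal_ne_top hfin),
      ENNReal.toReal_mul, ENNReal.toReal_mul,
      ENNReal.toReal_ofReal (show (0:ℝ) ≤ 2⁻¹ * ‖F uαδ - yδ‖^2 by positivity),
      ENNReal.toReal_ofReal (show (0:ℝ) ≤ 2⁻¹ * ‖F udag - yδ‖^2 by positivity),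
      ENNReal.toReal_ofReal hα.le] at h
    exact h
  -- source condition in real form
  have hsrc : A + (inner ℝ ξ (uαδ - udag) : ℝ) ≤ B := by
    have h := hsource uαδ
    have h2 : (ENNReal.ofReal (A + (inner ℝ ξ (uαδ - udag) : ℝ))).toReal ≤ B :=
      ENNReal.toReal_mono hRufin h
    rw [ENNReal.toReal_ofReal'] at h2
    exact le_trans (le_max_left _ _) h2
  -- adjoint / Cauchy-Schwarz
  have hadj : (inner ℝ ξ (udag - uαδ) : ℝ) = (inner ℝ ω (y - F uαδ) : ℝ) := by
    rw [hξ, ContinuousLinearMap.adjoint_inner_left, map_sub, hsol]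
  have hinner : (inner ℝ ξ (udag - uαδ) : ℝ) ≤ ‖ω‖ * δ + ‖ω‖ * r := by
    rw [hadj]
    have : y - F uαδ = (y - yδ) + (yδ - F uαδ) := by abel
    rw [this, inner_add_right]
    have h1 : (inner ℝ ω (y - yδ) : ℝ) ≤ ‖ω‖ * δ :=
      le_trans (real_inner_le_norm _ _) (by nlinarith [norm_nonneg ω])
    have h2 : (inner ℝ ω (yδ - F uαδ) : ℝ) ≤ ‖ω‖ * r := by
      have := real_inner_le_norm ω (yδ - F uαδ)
      rw [norm_sub_rev] at this
      exact this
    linarith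
  have hinner' : (inner ℝ ξ (uαδ - udag) : ℝ) = -(inner ℝ ξ (udag - uαδ) : ℝ) := by
    rw [← inner_neg_right]; congr 1; abel
  have hFu : ‖F udag - yδ‖ = ‖y - yδ‖ := by rw [hsol]
  have hres : 2⁻¹ * r^2 ≤ 2⁻¹ * δ^2 + α * (‖ω‖ * δ + ‖ω‖ * r) := by
    have hd : ‖F udag - yδ‖^2 ≤ δ^2 := by
      rw [hFu]; exact pow_le_pow_left₀ (norm_nonneg _) hy 2
    nlinarith [hsrc, hinner, hinner']
  have hC2 : r^2 ≤ (2 + 4*c*‖ω‖ + 4*c^2*‖ω‖^2) * δ^2 := by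
    nlinarith [sq_nonneg (r - 2*c*δ*‖ω‖), norm_nonneg ω, hδ.le]
  have hCδ : 0 ≤ Real.sqrt (2 + 4*c*‖ω‖ + 4*c^2*‖ω‖^2) * δ := by positivity
  nlinarith [Real.sq_sqrt (by positivity : (0:ℝ) ≤ 2 + 4*c*‖ω‖ + 4*c^2*‖ω‖^2),
    sq_nonneg (r - Real.sqrt (2 + 4*c*‖ω‖ + 4*c^2*‖ω‖^2) * δ), hCδ, hr0]
end

section
/- Suppose u† ∈ U satisfies F u† = y and R(u†) < ∞, and suppose there exists ω ∈ V such that ξ = F* ω satisfies R(u) ≥ R(u†) + ⟨ξ, u − u†⟩ for all u ∈ U. Let δ > 0, let y^δ ∈ V satisfy ‖y − y^δ‖ ≤ δ, let α > 0, and let u_α be a minimizer of T_{α,y^δ} with R(u_α) < ∞. Then D_ξ(u_α, u†) ≤ (δ + α‖ω‖)²/(2α) and ‖F u_α − y^δ‖ ≤ δ + 2 α ‖ω‖. -/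
open Filter Topology ENNReal

set_option maxHeartbeats 1000000 in
/-- Under the source condition `ξ = F* ω ∈ ∂R(u†)`, for `‖y − y^δ‖ ≤ δ`
and any minimizer `u_α` of `T_{α,y^δ}` with `R(u_α) < ∞`, one has
`D_ξ(u_α, u†) ≤ (δ + α‖ω‖)²/(2α)` and `‖F u_α − y^δ‖ ≤ δ + 2α‖ω‖`. -/
theorem tikhonov_quantitative_estimates
    {U V : Type*} [NormedAddCommGroup U] [InnerProductSpace ℝ U] [CompleteSpace U]
    [NormedAddCommGroup V] [InnerProductSpace ℝ V] [CompleteSpace V]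
    (F : U →L[ℝ] V) (R : U → ℝ≥0∞)
    (hproper : ∃ u : U, R u ≠ ⊤)
    (hconvex : ∀ u v : U, ∀ t : ℝ, 0 ≤ t → t ≤ 1 →
      R (t • u + (1 - t) • v) ≤ ENNReal.ofReal t * R u + ENNReal.ofReal (1 - t) * R v)
    (y : V) (udag : U) (hsol : F udag = y) (hfin : R udag ≠ ⊤)
    (ω : V) (ξ : U) (hξ : ξ = (ContinuousLinearMap.adjoint F) ω)
    (hsource : ∀ u : U,
      ENNReal.ofReal ((R udag).toReal + (inner ℝ ξ (u - udag) : ℝ)) ≤ R u)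
    (δ : ℝ) (hδ : 0 < δ) (yδ : V) (hnoise : ‖y - yδ‖ ≤ δ)
    (α : ℝ) (hα : 0 < α) (uα : U)
    (hmin : ∀ w : U, Tik F R α yδ uα ≤ Tik F R α yδ w) (hfinα : R uα ≠ ⊤) :
    Breg R ξ uα udag ≤ (δ + α * ‖ω‖) ^ 2 / (2 * α) ∧
    ‖F uα - yδ‖ ≤ δ + 2 * α * ‖ω‖ := by

  -- real-valued minimality inequality
  have h1 := hmin udag
  unfold Tik at h1
  rw [hsol] at h1
  have hRHSne : ENNReal.ofReal (2⁻¹ * ‖y - yδ‖ ^ 2) + ENNReal.ofReal α * R udag ≠ ⊤ := by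
    exact ENNReal.add_ne_top.mpr ⟨ENNReal.ofReal_ne_top, ENNReal.mul_ne_top ENNReal.ofReal_ne_top hfin⟩
  have hLHSne : ENNReal.ofReal (2⁻¹ * ‖F uα - yδ‖ ^ 2) + ENNReal.ofReal α * R uα ≠ ⊤ := by
    exact ENNReal.add_ne_top.mpr ⟨ENNReal.ofReal_ne_top, ENNReal.mul_ne_top ENNReal.ofReal_ne_top hfinα⟩
  have key : 2⁻¹ * ‖F uα - yδ‖ ^ 2 + α * (R uα).toReal ≤
      2⁻¹ * ‖y - yδ‖ ^ 2 + α * (R udag).toReal := by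
    have := ENNReal.toReal_mono hRHSne h1
    rw [ENNReal.toReal_add (by exact ENNReal.ofReal_ne_top) (ENNReal.mul_ne_top ENNReal.ofReal_ne_top hfinα),
        ENNReal.toReal_add (by exact ENNReal.ofReal_ne_top) (ENNReal.mul_ne_top ENNReal.ofReal_ne_top hfin),
        ENNReal.toReal_mul, ENNReal.toReal_mul,
        ENNReal.toReal_ofReal (by positivity), ENNReal.toReal_ofReal (by positivity),
        ENNReal.toReal_ofReal (by positivity)] at this
    exact this
  -- source condition in real form
  have hsrc : (R udag).toReal + (inner ℝ ξ (uα - udag) : ℝ) ≤ (R uα).toReal := by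
    have h := hsource uα
    by_cases hx : 0 ≤ (R udag).toReal + (inner ℝ ξ (uα - udag) : ℝ)
    · have h2 := ENNReal.toReal_mono hfinα h
      rwa [ENNReal.toReal_ofReal hx] at h2
    · exact le_trans (le_of_not_ge hx) ENNReal.toReal_nonneg
  -- inner product rewrite
  have hinner : (inner ℝ ξ (uα - udag) : ℝ) =
      (inner ℝ ω (F uα - yδ) : ℝ) + (inner ℝ ω (yδ - y) : ℝ) := by
    rw [hξ, ContinuousLinearMap.adjoint_inner_left, map_sub, hsol]
    rw [← inner_add_right]
    congr 1
    abel
  have hCS1 : (inner ℝ ω (F uα - yδ) : ℝ) ≤ ‖ω‖ * ‖F uα - yδ‖ := real_inner_le_norm ω _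
  have hCS1' : -(‖ω‖ * ‖F uα - yδ‖) ≤ (inner ℝ ω (F uα - yδ) : ℝ) := by
    have := real_inner_le_norm ω (yδ - F uα)
    rw [inner_sub_right] at this
    have h2 : (inner ℝ ω (F uα - yδ) : ℝ) = (inner ℝ ω (F uα) : ℝ) - inner ℝ ω yδ := by
      rw [inner_sub_right]
    rw [norm_sub_rev] at this
    linarith
  have hCS2 : (inner ℝ ω (yδ - y) : ℝ) ≤ ‖ω‖ * δ := by
    calc (inner ℝ ω (yδ - y) : ℝ) ≤ ‖ω‖ * ‖yδ - y‖ := real_inner_le_norm ω _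
      _ ≤ ‖ω‖ * δ := by
          rw [norm_sub_rev]
          exact mul_le_mul_of_nonneg_left hnoise (norm_nonneg ω)
  have hCS2' : -(‖ω‖ * δ) ≤ (inner ℝ ω (yδ - y) : ℝ) := by
    have h := real_inner_le_norm ω (y - yδ)
    have h2 : (inner ℝ ω (y - yδ) : ℝ) = -(inner ℝ ω (yδ - y) : ℝ) := by
      rw [← inner_neg_right]; congr 1; abel
    have h3 : ‖ω‖ * ‖y - yδ‖ ≤ ‖ω‖ * δ :=
      mul_le_mul_of_nonneg_left hnoise (norm_nonneg ω)
    linarith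
  have hnd : ‖y - yδ‖ ^ 2 ≤ δ ^ 2 := by
    have := norm_nonneg (y - yδ)
    nlinarith
  set t := ‖F uα - yδ‖ with ht
  have htnn : 0 ≤ t := norm_nonneg _
  have hwnn : 0 ≤ ‖ω‖ := norm_nonneg _
  have hD : Breg R ξ uα udag =
      (R uα).toReal - (R udag).toReal - (inner ℝ ξ (uα - udag) : ℝ) := rfl
  have hDnn : 0 ≤ Breg R ξ uα udag := by rw [hD]; linarith
  have hαD : α * Breg R ξ uα udag ≤ 2⁻¹ * δ ^ 2 - 2⁻¹ * t ^ 2 + α * (‖ω‖ * t) + α * (‖ω‖ * δ) := by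
    rw [hD, hinner]
    have hkey2 : α * ((R uα).toReal - (R udag).toReal) ≤ 2⁻¹ * δ ^ 2 - 2⁻¹ * t ^ 2 := by nlinarith
    nlinarith [hCS1', hCS2']
  constructor
  · rw [div_eq_inv_mul, ← mul_le_mul_iff_of_pos_left hα]
    have h2α : α * ((2 * α)⁻¹ * (δ + α * ‖ω‖) ^ 2) = 2⁻¹ * (δ + α * ‖ω‖) ^ 2 := by
      field_simp
    rw [h2α]
    nlinarith [sq_nonneg (t - α * ‖ω‖)]
  · have hq : 2⁻¹ * t ^ 2 ≤ 2⁻¹ * δ ^ 2 + α * (‖ω‖ * t) + α * (‖ω‖ * δ) := by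
      linarith [hαD, mul_nonneg hα.le hDnn]
    nlinarith [hq, htnn, hδ, mul_nonneg hα.le hwnn]
end
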